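/- Let A, B, β, γ ∈ ℂ with A ≠ 0, B ≠ 0, and B/(A+B) ∉ ℤ \ {0} (in particular A + B ≠ 0). If a polynomial P(z) satisfies P''' − B P P'' − A(P')² + β P' + γ P + δ = 0 identically on ℂ, then deg P ≤ 2. -/
import Mathlib

open Polynomial in
theorem stmt16 (A B β γ δ : ℂ) (hA : A ≠ 0) (hB : B ≠ 0)
    (hgen : ¬∃ m : ℤ, m ≠ 0 ∧ B / (A + B) = (m : ℂ))
    (P : Polynomial ℂ)
    (hode : ∀ z : ℂ,
      deriv (deriv (deriv fun w => P.eval w)) z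
        - B * P.eval z * deriv (deriv fun w => P.eval w) z
        - A * (deriv (fun w => P.eval w) z) ^ 2
        + β * deriv (fun w => P.eval w) z + γ * P.eval z + δ = 0) :
    P.natDegree ≤ 2 := by
  by_contra hn
  push_neg at hn
  obtain ⟨m, hm⟩ : ∃ m, P.natDegree = m + 3 := ⟨P.natDegree - 3, by omega⟩
  have hP0 : P ≠ 0 := fun h => by simp [h] at hm
  have hc : P.coeff (m + 3) ≠ 0 := by
    have := Polynomial.leadingCoeff_ne_zero.mpr hP0
    rwa [Polynomial.leadingCoeff, hm] at this
  set c := P.coeff (m + 3) with hc_def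
  have hm3 : ((m : ℂ) + 3) ≠ 0 := by
    have : ((m + 3 : ℕ) : ℂ) ≠ 0 := Nat.cast_ne_zero.mpr (by omega)
    push_cast at this; exact this
  have hm2 : ((m : ℂ) + 2) ≠ 0 := by
    have : ((m + 2 : ℕ) : ℂ) ≠ 0 := Nat.cast_ne_zero.mpr (by omega)
    push_cast at this; exact this
  -- derivative degrees and leading coefficients
  have hcd1 : (derivative P).coeff (m + 2) = c * (m + 3) := by
    rw [Polynomial.coeff_derivative]; push_cast; ring
  have hd1 : (derivative P).natDegree = m + 2 := by
    refine Polynomial.natDegree_eq_of_le_of_coeff_ne_zero ?_ ?_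
    · have := Polynomial.natDegree_derivative_le P; omega
    · rw [hcd1]
      exact mul_ne_zero hc hm3
  have hcd2 : (derivative (derivative P)).coeff (m + 1) = c * (m + 3) * (m + 2) := by
    rw [Polynomial.coeff_derivative, hcd1]; push_cast; ring
  have hd2 : (derivative (derivative P)).natDegree = m + 1 := by
    refine Polynomial.natDegree_eq_of_le_of_coeff_ne_zero ?_ ?_
    · have := Polynomial.natDegree_derivative_le (derivative P); omega
    · rw [hcd2]
      exact mul_ne_zero (mul_ne_zero hc hm3) hm2
  have hd3 : (derivative (derivative (derivative P))).natDegree ≤ m := by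
    have := Polynomial.natDegree_derivative_le (derivative (derivative P)); omega
  -- the ODE as a polynomial identity
  set Q : Polynomial ℂ :=
    derivative (derivative (derivative P)) - C B * (P * derivative (derivative P))
      - C A * (derivative P) ^ 2 + C β * derivative P + C γ * P + C δ with hQ_def
  have hderiv : ∀ (q : Polynomial ℂ), (deriv fun w => q.eval w) = fun z => (derivative q).eval z :=
    fun q => funext fun z => Polynomial.deriv q
  have hQ : Q = 0 := by
    apply Polynomial.funext
    intro z
    have h := hode z
    simp only [hderiv] at h
    simp only [hQ_def, Polynomial.eval_add, Polynomial.eval_sub, Polynomial.eval_mul,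
      Polynomial.eval_pow, Polynomial.eval_C, Polynomial.eval_zero]
    linear_combination h
  -- extract the coefficient at degree 2m+4
  have hco := congrArg (fun q => Polynomial.coeff q (2 * m + 4)) hQ
  simp only [hQ_def, Polynomial.coeff_add, Polynomial.coeff_sub, Polynomial.coeff_C_mul,
    Polynomial.coeff_zero] at hco
  have hk1 : 2 * m + 4 = P.natDegree + (derivative (derivative P)).natDegree := by
    rw [hm, hd2]; ring
  have hk2 : 2 * m + 4 = (derivative P).natDegree + (derivative P).natDegree := by
    rw [hd1]; ring
  have e1 : (derivative (derivative (derivative P))).coeff (2 * m + 4) = 0 :=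
    Polynomial.coeff_eq_zero_of_natDegree_lt (by omega)
  have e2 : (P * derivative (derivative P)).coeff (2 * m + 4)
      = c * (c * (m + 3) * (m + 2)) := by
    rw [hk1, Polynomial.coeff_mul_degree_add_degree, Polynomial.leadingCoeff,
      Polynomial.leadingCoeff, hm, hd2, hcd2]
  have e3 : ((derivative P) ^ 2).coeff (2 * m + 4) = (c * (m + 3)) * (c * (m + 3)) := by
    rw [sq, hk2, Polynomial.coeff_mul_degree_add_degree, Polynomial.leadingCoeff, hd1, hcd1]
  have e4 : (derivative P).coeff (2 * m + 4) = 0 :=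
    Polynomial.coeff_eq_zero_of_natDegree_lt (by omega)
  have e5 : P.coeff (2 * m + 4) = 0 :=
    Polynomial.coeff_eq_zero_of_natDegree_lt (by omega)
  have e6 : (C δ : Polynomial ℂ).coeff (2 * m + 4) = 0 := by
    rw [Polynomial.coeff_C]; simp
  rw [e1, e2, e3, e4, e5, e6] at hco
  -- algebra: B(m+2) + A(m+3) = 0, i.e. (A+B)(m+3) = B
  have key : (A + B) * ((m : ℂ) + 3) - B = 0 := by
    have h0 : c * c * ((m : ℂ) + 3) * ((A + B) * ((m : ℂ) + 3) - B) = 0 := by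
      linear_combination -hco
    rcases mul_eq_zero.mp h0 with h | h
    · exact absurd h (mul_ne_zero (mul_ne_zero hc hc) hm3)
    · exact h
  have hAB : A + B ≠ 0 := by
    intro h
    rw [h, zero_mul, zero_sub, neg_eq_zero] at key
    exact hB key
  exact hgen ⟨(m : ℤ) + 3, by omega, by
    push_cast
    rw [div_eq_iff hAB]
    linear_combination -key⟩
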